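/- Let r = n+1, with b_1,…,b_n distinct mod π, ν = Σ_{j=1}^{n+1} a_j − Σ_{j=1}^{n} b_j, and z avoiding poles. Then ∏_{j=1}^{n+1} sin(a_j−z) / ∏_{j=1}^{n} sin(b_j−z) = sin(ν−z) + Σ_{j=1}^{n} [∏_{k=1}^{n+1} sin(a_k−b_j)] / [∏_{m≠j} sin(b_m−b_j) · sin(b_j−z)]. -/

import Mathlib

open Finset

section Aux
open Polynomial

lemma kappa_prod_neg' {n : ℕ} (f : Fin n → ℂ) : (∏ k, -(f k)) = (-1)^n * ∏ k, f k := by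
  rw [show ((-1 : ℂ))^n = ∏ _k : Fin n, (-1 : ℂ) by simp, ← Finset.prod_mul_distrib]
  simp

lemma kappa_key (n : ℕ) (A : Fin (n+1) → ℂ) (B : Fin n → ℂ)
    (hB0 : ∀ j, B j ≠ 0) (hBB : Function.Injective B) (t : ℂ) :
    ∏ k, (t - A k) = (t - (∏ k, A k) / (∏ l, B l)) * ∏ l, (t - B l)
      + ∑ j, (∏ k, (B j - A k)) / (B j * ∏ l ∈ univ.erase j, (B j - B l)) *
          (t * ∏ l ∈ univ.erase j, (t - B l)) := by
  classical
  set N : ℂ := (∏ k, A k) / (∏ l, B l) with hN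
  set e : Fin n → ℂ := fun j => (∏ k, (B j - A k)) / (B j * ∏ l ∈ univ.erase j, (B j - B l)) with he
  have hBprod : (∏ l, B l) ≠ 0 := prod_ne_zero_iff.2 fun l _ => hB0 l
  have hBBne : ∀ (j : Fin n), ∀ l ∈ univ.erase j, B j - B l ≠ 0 := by
    intro j l hl
    have : l ≠ j := (mem_erase.1 hl).1
    exact sub_ne_zero.2 fun h => this (hBB h.symm)
  set P : ℂ[X] := ∏ k, (X - C (A k)) with hP
  set Q : ℂ[X] := (X - C N) * ∏ l, (X - C (B l)) with hQ
  set S : ℂ[X] := ∑ j, C (e j) * (X * ∏ l ∈ univ.erase j, (X - C (B l))) with hS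
  have hg : P - Q - S = 0 := by
    have hmonicP : P.Monic := monic_prod_of_monic _ _ fun k _ => monic_X_sub_C _
    have hmonicQ : Q.Monic := (monic_X_sub_C _).mul (monic_prod_of_monic _ _ fun l _ => monic_X_sub_C _)
    have hdegP : P.natDegree = n + 1 := by
      rw [hP, natDegree_prod _ _ fun k _ => X_sub_C_ne_zero (A k)]
      simp
    have hdegQ : Q.natDegree = n + 1 := by
      rw [hQ, natDegree_mul (X_sub_C_ne_zero N)
        (prod_ne_zero_iff.2 fun l _ => X_sub_C_ne_zero (B l))]
      rw [natDegree_prod _ _ fun l _ => X_sub_C_ne_zero (B l)]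
      simp [add_comm]
    have hPQ : (P - Q).natDegree ≤ n := by
      rcases eq_or_ne P Q with h | h
      · simp [h]
      have hd : P.degree = Q.degree := by
        rw [degree_eq_natDegree hmonicP.ne_zero, degree_eq_natDegree hmonicQ.ne_zero, hdegP, hdegQ]
      have hlc : P.leadingCoeff = Q.leadingCoeff := by
        rw [hmonicP.leadingCoeff, hmonicQ.leadingCoeff]
      have hlt := degree_sub_lt hd hmonicP.ne_zero hlc
      have h2 : (P - Q).natDegree < n + 1 := by
        rw [natDegree_lt_iff_degree_lt (sub_ne_zero.2 h)]
        rw [degree_eq_natDegree hmonicP.ne_zero, hdegP] at hlt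
        exact_mod_cast hlt
      omega
    have hSdeg : S.natDegree ≤ n := by
      rw [hS]
      refine natDegree_sum_le_of_forall_le _ _ fun j _ => ?_
      have hn : 1 ≤ n := Nat.one_le_iff_ne_zero.2 (by rintro rfl; exact j.elim0)
      have h0 : (∏ l ∈ univ.erase j, (X - C (B l)) : ℂ[X]).natDegree ≤ n - 1 := by
        refine le_trans (natDegree_prod_le _ _) ?_
        calc (∑ l ∈ univ.erase j, (X - C (B l) : ℂ[X]).natDegree)
            = (univ.erase j).card := by simp
          _ ≤ n - 1 := by rw [card_erase_of_mem (mem_univ j)]; simp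
      have h1 : (X * ∏ l ∈ univ.erase j, (X - C (B l)) : ℂ[X]).natDegree ≤ n := by
        refine le_trans natDegree_mul_le ?_
        simp only [natDegree_X]
        omega
      calc (C (e j) * (X * ∏ l ∈ univ.erase j, (X - C (B l)))).natDegree
          ≤ (C (e j)).natDegree + (X * ∏ l ∈ univ.erase j, (X - C (B l))).natDegree :=
            natDegree_mul_le
        _ ≤ n := by simpa using h1
    have hdeg : (P - Q - S).natDegree ≤ n :=
      le_trans (natDegree_sub_le _ _) (by omega)
    set v : Fin (n+1) → ℂ := Fin.cases 0 B with hv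
    have hvinj : Function.Injective v := by
      intro i i' h
      induction i using Fin.cases with
      | zero => induction i' using Fin.cases with
        | zero => rfl
        | succ k => exact absurd h (by simpa [hv] using (hB0 k).symm)
      | succ k => induction i' using Fin.cases with
        | zero => exact absurd h (by simpa [hv] using (hB0 k))
        | succ k' => simp only [hv, Fin.cases_succ] at h; rw [hBB h]
    refine eq_zero_of_natDegree_lt_card_of_eval_eq_zero _ hvinj ?_ ?_
    · intro i
      induction i using Fin.cases with
      | zero =>
        have hSz : S.eval 0 = 0 := by
          rw [hS, eval_finset_sum]
          refine Finset.sum_eq_zero fun j _ => ?_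
          simp
        have hPz : P.eval 0 = ∏ k, -(A k) := by
          rw [hP, eval_prod]; simp
        have hQz : Q.eval 0 = -N * ∏ l, -(B l) := by
          rw [hQ, eval_mul, eval_prod]; simp
        simp only [hv, Fin.cases_zero, eval_sub, hSz, hPz, hQz, sub_zero]
        rw [kappa_prod_neg', kappa_prod_neg', hN]
        rw [sub_eq_zero]
        field_simp
        ring
      | succ j =>
        have hQz : Q.eval (B j) = 0 := by
          rw [hQ, eval_mul, eval_prod]
          have : ((X : ℂ[X]) - C (B j)).eval (B j) = 0 := by simp
          rw [Finset.prod_eq_zero (mem_univ j) this, mul_zero]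
        have hSz : S.eval (B j) = ∏ k, (B j - A k) := by
          rw [hS, eval_finset_sum]
          rw [Finset.sum_eq_single j]
          · simp only [eval_mul, eval_C, eval_X, eval_prod, eval_sub]
            rw [he]
            have hd : (B j * ∏ l ∈ univ.erase j, (B j - B l)) ≠ 0 :=
              mul_ne_zero (hB0 j) (prod_ne_zero_iff.2 (hBBne j))
            exact div_mul_cancel₀ _ hd
          · intro j' _ hj'
            have hmem : j ∈ univ.erase j' := mem_erase.2 ⟨fun h => hj' h.symm, mem_univ j⟩
            have : ((X : ℂ[X]) - C (B j)).eval (B j) = 0 := by simp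
            rw [eval_mul, eval_mul, eval_prod, Finset.prod_eq_zero hmem this]
            simp
          · simp
        have hPz : P.eval (B j) = ∏ k, (B j - A k) := by
          rw [hP, eval_prod]; simp
        simp [hv, hQz, hSz, hPz]
    · rw [Fintype.card_fin]; omega
  have h0 := congrArg (Polynomial.eval t) hg
  rw [hP, hQ, hS] at h0
  simp only [eval_sub, eval_mul, eval_prod, eval_finset_sum, eval_X, eval_C, eval_zero] at h0
  rw [sub_sub, sub_eq_zero] at h0
  rw [h0]

noncomputable def kcI : ℂ := Complex.log (Complex.I / 2)

lemma kcI_exp : Complex.exp kcI = Complex.I / 2 :=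
  Complex.exp_log (by simp [Complex.I_ne_zero])

noncomputable def Fc (x y : ℂ) : ℂ := Complex.exp (-Complex.I*(x+y) + kcI)

noncomputable def e2 (w : ℂ) : ℂ := Complex.exp (2*Complex.I*w)

lemma Fc_ne_zero (x y : ℂ) : Fc x y ≠ 0 := Complex.exp_ne_zero _

lemma e2_ne_zero (w : ℂ) : e2 w ≠ 0 := Complex.exp_ne_zero _

lemma sin_eq (x y : ℂ) : Complex.sin (x - y) = Fc x y * (e2 y - e2 x) := by
  rw [Complex.sin, Fc, e2, e2, Complex.exp_add, kcI_exp]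
  have e1 : Complex.exp (-Complex.I*(x+y)) * Complex.exp (2*Complex.I*y)
      = Complex.exp (-(x-y)*Complex.I) := by rw [← Complex.exp_add]; congr 1; ring
  have e2' : Complex.exp (-Complex.I*(x+y)) * Complex.exp (2*Complex.I*x)
      = Complex.exp ((x-y)*Complex.I) := by rw [← Complex.exp_add]; congr 1; ring
  linear_combination (-Complex.I/2) * e1 + (Complex.I/2) * e2'

lemma prod_Fc {m : ℕ} (x : Fin m → ℂ) (y : ℂ) :
    (∏ k, Fc (x k) y)
      = Complex.exp (-Complex.I * ((∑ k, x k) + m*y) + m * kcI) := by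
  unfold Fc
  rw [← Complex.exp_sum]
  congr 1
  rw [Finset.sum_add_distrib, Finset.sum_const, ← Finset.mul_sum, Finset.sum_add_distrib,
    Finset.sum_const]
  simp [nsmul_eq_mul, mul_add]

lemma prod_e2 {m : ℕ} (x : Fin m → ℂ) :
    (∏ k, e2 (x k)) = Complex.exp (2*Complex.I*∑ k, x k) := by
  unfold e2
  rw [← Complex.exp_sum, Finset.mul_sum]

lemma kappa_H2 (n : ℕ) (α : Fin (n+1) → ℂ) (β : Fin n → ℂ) (μ : ℂ)
    (hμ : μ = (∑ k, α k) - ∑ l, β l)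
    (hβ : ∀ l j : Fin n, l ≠ j → Complex.sin (β l - β j) ≠ 0) (w : ℂ) :
    ∏ k, Complex.sin (α k - w)
      = Complex.sin (μ - w) * ∏ l, Complex.sin (β l - w)
        + ∑ j, (∏ k, Complex.sin (α k - β j)) * (∏ l ∈ univ.erase j, Complex.sin (β l - w))
            / (∏ l ∈ univ.erase j, Complex.sin (β l - β j)) := by
  classical
  have hB0 : ∀ j : Fin n, e2 (β j) ≠ 0 := fun j => e2_ne_zero _
  have hBne : ∀ l j : Fin n, l ≠ j → e2 (β l) ≠ e2 (β j) := by
    intro l j h hne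
    apply hβ j l (fun hh => h hh.symm)
    rw [sin_eq, hne, sub_self, mul_zero]
  have hBinj : Function.Injective (fun l => e2 (β l)) := by
    intro l j h
    by_contra hne
    exact hBne l j hne h
  have hk := kappa_key n (fun k => e2 (α k)) (fun l => e2 (β l)) hB0 hBinj (e2 w)
  have hN : (∏ k, e2 (α k)) / (∏ l, e2 (β l)) = e2 μ := by
    rw [prod_e2, prod_e2, ← Complex.exp_sub, e2]
    congr 1
    rw [hμ]
    ring
  rw [hN] at hk
  have hc1 : (∏ k, Fc (α k) w) = Fc μ w * ∏ l, Fc (β l) w := by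
    rw [prod_Fc, prod_Fc, Fc, ← Complex.exp_add]
    congr 1
    rw [hμ]
    push_cast
    ring
  simp only [sin_eq, Finset.prod_mul_distrib]
  rw [hk, mul_add, Finset.mul_sum]
  congr 1
  · rw [hc1]; ring
  refine Finset.sum_congr rfl fun j _ => ?_
  have full : (∏ k, Fc (α k) (β j)) * (∏ l, Fc (β l) w) * Fc (β j) (β j) * e2 (β j)
      = (∏ k, Fc (α k) w) * e2 w * (∏ l, Fc (β l) (β j)) * Fc (β j) w := by
    rw [prod_Fc, prod_Fc, prod_Fc, prod_Fc]
    unfold Fc e2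
    simp only [← Complex.exp_add]
    congr 1
    push_cast
    ring
  have m1 := Finset.mul_prod_erase univ (fun l => Fc (β l) w) (mem_univ j)
  have m2 := Finset.mul_prod_erase univ (fun l => Fc (β l) (β j)) (mem_univ j)
  rw [← m1, ← m2] at full
  have hc2 : (∏ k, Fc (α k) (β j)) * (∏ l ∈ univ.erase j, Fc (β l) w) * e2 (β j)
      = (∏ k, Fc (α k) w) * e2 w * (∏ l ∈ univ.erase j, Fc (β l) (β j)) := by
    apply mul_right_cancel₀ (mul_ne_zero (Fc_ne_zero (β j) w) (Fc_ne_zero (β j) (β j)))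
    linear_combination full
  have hP2 : (∏ l ∈ univ.erase j, (e2 (β j) - e2 (β l))) ≠ 0 := by
    refine prod_ne_zero_iff.2 fun l hl => ?_
    exact sub_ne_zero.2 fun h => hBne l j (mem_erase.1 hl).1 h.symm
  have hG2 : (∏ l ∈ univ.erase j, Fc (β l) (β j)) ≠ 0 :=
    prod_ne_zero_iff.2 fun l _ => Fc_ne_zero _ _
  field_simp [hP2, hG2, e2_ne_zero, Fc_ne_zero]
  linear_combination (-(∏ k, (e2 (β j) - e2 (α k))) * (∏ l ∈ univ.erase j, (e2 w - e2 (β l)))) * hc2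

end Aux

theorem kappa_one_expansion (n : ℕ) (a : Fin (n + 1) → ℝ) (b : Fin n → ℝ)
    (hb : ∀ j k, j ≠ k → Real.sin (b j - b k) ≠ 0)
    (ν : ℝ) (hν : ν = ∑ j, a j - ∑ j, b j)
    (z : ℂ) (hz : ∀ j, Complex.sin ((b j : ℂ) - z) ≠ 0) :
    (∏ j, Complex.sin ((a j : ℂ) - z)) / (∏ j, Complex.sin ((b j : ℂ) - z))
      = Complex.sin ((ν : ℂ) - z) +
        ∑ j, (∏ k, Complex.sin ((a k : ℂ) - (b j : ℂ))) /
          ((∏ l ∈ univ.erase j, Complex.sin ((b l : ℂ) - (b j : ℂ))) *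
            Complex.sin ((b j : ℂ) - z)) := by
  classical
  have hbb : ∀ (l j : Fin n), l ≠ j → Complex.sin ((b l : ℂ) - (b j : ℂ)) ≠ 0 := by
    intro l j h
    have h1 := hb l j h
    rw [show ((b l : ℂ) - (b j : ℂ)) = ((b l - b j : ℝ) : ℂ) by push_cast; ring,
      ← Complex.ofReal_sin]
    exact_mod_cast h1
  have H := kappa_H2 n (fun k => ((a k : ℝ) : ℂ)) (fun l => ((b l : ℝ) : ℂ)) (ν : ℂ)
    (by rw [hν]; push_cast; ring) hbb z
  have hPBne : (∏ l, Complex.sin ((b l : ℂ) - z)) ≠ 0 :=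
    prod_ne_zero_iff.2 fun l _ => hz l
  rw [div_eq_iff hPBne, H, add_mul, Finset.sum_mul]
  congr 1
  refine Finset.sum_congr rfl fun j _ => ?_
  rw [← Finset.mul_prod_erase univ (fun l => Complex.sin ((b l : ℂ) - z)) (mem_univ j)]
  have h1 : Complex.sin ((b j : ℂ) - z) ≠ 0 := hz j
  have h2 : (∏ l ∈ univ.erase j, Complex.sin ((b l : ℂ) - (b j : ℂ))) ≠ 0 :=
    prod_ne_zero_iff.2 fun l hl => hbb l j (mem_erase.1 hl).1
  field_simp
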